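/- Proposition 6 (low-uncertainty asymptotics): For every fixed ε ∈ (0,1), ( Φ(ε,d) − ε ) / √d → √( 2·ε·(1−ε) ) as d → 0⁺; equivalently Φ(ε,d) = ε + √(2·d·ε·(1−ε)) + o(√d). -/

import Mathlib

open Real Filter

/-- The dual characterization `Φ(ε,d) = inf_{s>0} [s·ln(1 + (e^{1/s} − 1)·ε) + s·d]`
of the compound outage probability (Theorem 1). -/
noncomputable def Phi (e d : ℝ) : ℝ :=
  sInf {y : ℝ | ∃ s : ℝ, 0 < s ∧
    y = s * Real.log (1 + (Real.exp (1 / s) - 1) * e) + s * d}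


lemma aux_log_lb (x : ℝ) (hx : 0 ≤ x) : x - x^2/2 ≤ Real.log (1+x) := by
  have mono : MonotoneOn (fun x : ℝ => Real.log (1+x) - (x - x^2/2)) (Set.Ici 0) := by
    apply monotoneOn_of_hasDerivWithinAt_nonneg (convex_Ici 0)
      (f' := fun x => 1/(1+x) - (1 - x))
    · apply ContinuousOn.sub
      · apply ContinuousOn.log (by fun_prop)
        intro x hx
        simp only [Set.mem_Ici] at hx
        positivity
      · fun_prop
    · intro x hx
      rw [interior_Ici] at hx
      have hx0 : (0:ℝ) < x := hx
      have h1 : HasDerivAt (fun x : ℝ => Real.log (1+x)) (1/(1+x)) x := by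
        have := ((hasDerivAt_id x).const_add 1).log (by positivity)
        simpa using this
      have h2 : HasDerivAt (fun x : ℝ => x - x^2/2) (1 - x) x := by
        have := (hasDerivAt_id x).sub ((hasDerivAt_pow 2 x).div_const 2)
        exact this.congr_deriv (by norm_num)
      exact (h1.sub h2).hasDerivWithinAt
    · intro x hx
      rw [interior_Ici] at hx
      have hx0 : (0:ℝ) < x := hx
      have h : (1-x) ≤ 1/(1+x) := by
        rw [le_div_iff₀ (by positivity)]
        nlinarith
      linarith
  have := mono Set.self_mem_Ici hx hx
  simp only [Real.log_one, add_zero] at this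
  norm_num at this
  linarith


lemma aux_log_ub (x : ℝ) (hx : 0 ≤ x) : Real.log (1+x) ≤ x - x^2/2 + x^3/3 := by
  have mono : MonotoneOn (fun x : ℝ => (x - x^2/2 + x^3/3) - Real.log (1+x)) (Set.Ici 0) := by
    apply monotoneOn_of_hasDerivWithinAt_nonneg (convex_Ici 0)
      (f' := fun x => (1 - x + x^2) - 1/(1+x))
    · apply ContinuousOn.sub
      · fun_prop
      · apply ContinuousOn.log (by fun_prop)
        intro x hx
        simp only [Set.mem_Ici] at hx
        positivity
    · intro x hx
      rw [interior_Ici] at hx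
      have hx0 : (0:ℝ) < x := hx
      have h1 : HasDerivAt (fun x : ℝ => Real.log (1+x)) (1/(1+x)) x := by
        have := ((hasDerivAt_id x).const_add 1).log (by positivity)
        simpa using this
      have h2 : HasDerivAt (fun x : ℝ => x - x^2/2 + x^3/3) (1 - x + x^2) x := by
        have := ((hasDerivAt_id x).sub ((hasDerivAt_pow 2 x).div_const 2)).add
          ((hasDerivAt_pow 3 x).div_const 3)
        exact this.congr_deriv (by norm_num)
      exact (h2.sub h1).hasDerivWithinAt
    · intro x hx
      rw [interior_Ici] at hx
      have hx0 : (0:ℝ) < x := hx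
      have h : 1/(1+x) ≤ 1 - x + x^2 := by
        rw [div_le_iff₀ (by positivity)]
        nlinarith
      linarith
  have := mono Set.self_mem_Ici hx hx
  simp only [Real.log_one, add_zero] at this
  norm_num at this
  linarith


lemma base_pos (e t : ℝ) (he0 : 0 < e) (he1 : e < 1) : 0 < 1 + (Real.exp t - 1) * e := by
  nlinarith [Real.exp_pos t]

lemma psi_nonneg (e t : ℝ) (he0 : 0 < e) (he1 : e < 1) :
    0 ≤ Real.log (1 + (Real.exp t - 1) * e) - e * t := by
  rw [sub_nonneg, Real.le_log_iff_exp_le (base_pos e t he0 he1)]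
  have hc := convexOn_exp.2 (Set.mem_univ t) (Set.mem_univ (0:ℝ)) he0.le
    (by linarith : (0:ℝ) ≤ 1 - e) (by ring)
  simp only [smul_eq_mul, mul_zero, add_zero, Real.exp_zero, mul_one] at hc
  linarith

lemma psi_lin (e t : ℝ) (he0 : 0 < e) (he1 : e < 1) :
    Real.log e + (1 - e) * t ≤ Real.log (1 + (Real.exp t - 1) * e) - e * t := by
  have h1 : e * Real.exp t ≤ 1 + (Real.exp t - 1) * e := by nlinarith [Real.exp_pos t]
  have h2 : Real.log (e * Real.exp t) ≤ Real.log (1 + (Real.exp t - 1) * e) :=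
    Real.log_le_log (by positivity) h1
  rw [Real.log_mul (ne_of_gt he0) (Real.exp_ne_zero t), Real.log_exp] at h2
  linarith

lemma psi_mono (e : ℝ) (he0 : 0 < e) (he1 : e < 1) :
    MonotoneOn (fun t => Real.log (1 + (Real.exp t - 1) * e) - e * t) (Set.Ici 0) := by
  apply monotoneOn_of_hasDerivWithinAt_nonneg (convex_Ici 0)
    (f' := fun t => Real.exp t * e / (1 + (Real.exp t - 1) * e) - e)
  · apply ContinuousOn.sub
    · apply ContinuousOn.log (by fun_prop)
      intro t _
      exact ne_of_gt (base_pos e t he0 he1)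
    · fun_prop
  · intro t _
    have h1 : HasDerivAt (fun t : ℝ => Real.log (1 + (Real.exp t - 1) * e))
        (Real.exp t * e / (1 + (Real.exp t - 1) * e)) t := by
      exact (((Real.hasDerivAt_exp t).sub_const 1).mul_const e).const_add 1
        |>.log (ne_of_gt (base_pos e t he0 he1))
    have h2 : HasDerivAt (fun t : ℝ => e * t) e t := by
      simpa using (hasDerivAt_id t).const_mul e
    exact (h1.sub h2).hasDerivWithinAt
  · intro t ht
    rw [interior_Ici] at ht
    have ht0 : (0:ℝ) < t := ht
    have hb := base_pos e t he0 he1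
    have hE : (1:ℝ) ≤ Real.exp t := Real.one_le_exp ht0.le
    rw [sub_nonneg, le_div_iff₀ hb]
    nlinarith [mul_nonneg (mul_nonneg (sub_nonneg.2 hE) (by linarith : (0:ℝ) ≤ 1 - e)) he0.le]


lemma exp_ub (t : ℝ) (h0 : 0 ≤ t) (h1 : t ≤ 1) :
    Real.exp t ≤ 1 + t + t^2/2 + (2/9)*t^3 := by
  have := Real.exp_bound' h0 h1 (n := 3) (by norm_num)
  simp [Finset.sum_range_succ, Nat.factorial] at this
  convert this using 1
  ring

theorem psi_poly (e t : ℝ) (he0 : 0 < e) (he1 : e < 1) (h0 : 0 ≤ t) (h1 : t ≤ 1)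
    (hL1 : ∀ x : ℝ, 0 ≤ x → x - x^2/2 ≤ Real.log (1+x))
    (hL2 : ∀ x : ℝ, 0 ≤ x → Real.log (1+x) ≤ x - x^2/2 + x^3/3) :
    e*(1-e)/2*t^2 - 3*t^3 ≤ Real.log (1 + (Real.exp t - 1) * e) - e * t ∧
    Real.log (1 + (Real.exp t - 1) * e) - e * t ≤ e*(1-e)/2*t^2 + 3*t^3 := by
  set E := Real.exp t with hE
  have hE1 : 1 + t + t^2/2 ≤ E := Real.quadratic_le_exp_of_nonneg h0
  have hE2 : E ≤ 1 + t + t^2/2 + (2/9)*t^3 := exp_ub t h0 h1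
  set x := (E - 1) * e with hxdef
  have hx0 : 0 ≤ x := by nlinarith
  have harg : 1 + (E - 1) * e = 1 + x := rfl
  rw [harg]
  have hxl : e*t + e*t^2/2 ≤ x := by nlinarith
  have hxu : x ≤ e*t + e*t^2/2 + (2/9)*t^3 := by nlinarith
  have hxu2 : x ≤ e*t + t^2 := by nlinarith
  have hxu3 : x ≤ 2*t := by nlinarith
  have hxsq : x^2 ≤ e^2*t^2 + 3*t^3 := by nlinarith [mul_self_le_mul_self hx0 hxu2]
  have hxsql : e^2*t^2 ≤ x^2 := by nlinarith [mul_self_le_mul_self (by positivity : (0:ℝ) ≤ e*t) (le_trans (by nlinarith) hxl)]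
  have hxcub : x^3 ≤ 8*t^3 := by
    calc x^3 ≤ (2*t)^3 := pow_le_pow_left₀ hx0 hxu3 3
    _ = 8*t^3 := by ring
  constructor
  · have := hL1 x hx0
    nlinarith [pow_nonneg h0 3]
  · have := hL2 x hx0
    nlinarith [pow_nonneg h0 3]




lemma base_pos' (e t : ℝ) (he0 : 0 < e) (he1 : e < 1) : 0 < 1 + (Real.exp t - 1) * e := by
  nlinarith [Real.exp_pos t]

lemma psi_nonneg' (e t : ℝ) (he0 : 0 < e) (he1 : e < 1) :
    0 ≤ Real.log (1 + (Real.exp t - 1) * e) - e * t := by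
  rw [sub_nonneg, Real.le_log_iff_exp_le (base_pos' e t he0 he1)]
  have hc := convexOn_exp.2 (Set.mem_univ t) (Set.mem_univ (0:ℝ)) he0.le
    (by linarith : (0:ℝ) ≤ 1 - e) (by ring)
  simp only [smul_eq_mul, mul_zero, add_zero, Real.exp_zero, mul_one] at hc
  linarith

lemma phi_ge (e d : ℝ) (he0 : 0 < e) (he1 : e < 1) (hd : 0 < d) (c : ℝ)
    (hc : ∀ t : ℝ, 0 < t →
      c ≤ (Real.log (1 + (Real.exp t - 1) * e) - e * t + d) / t) :
    e + c ≤ Phi e d := by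
  refine le_csInf ⟨_, 1, one_pos, rfl⟩ ?_
  rintro y ⟨s, hs, rfl⟩
  have ht : 0 < 1 / s := by positivity
  have h := hc (1 / s) ht
  have hrepr : s * Real.log (1 + (Real.exp (1 / s) - 1) * e) + s * d
      = e + (Real.log (1 + (Real.exp (1 / s) - 1) * e) - e * (1 / s) + d) / (1 / s) := by
    rw [div_div_eq_mul_div, div_one]
    field_simp
    ring
  rw [hrepr]
  linarith

lemma phi_le (e d : ℝ) (he0 : 0 < e) (he1 : e < 1) (hd : 0 < d) (t : ℝ) (ht : 0 < t) :
    Phi e d ≤ e + (Real.log (1 + (Real.exp t - 1) * e) - e * t + d) / t := by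
  apply csInf_le
  · refine ⟨e, ?_⟩
    rintro y ⟨s, hs, rfl⟩
    have hψ := psi_nonneg' e (1/s) he0 he1
    have hrepr : s * Real.log (1 + (Real.exp (1 / s) - 1) * e) + s * d
        = e + s * ((Real.log (1 + (Real.exp (1 / s) - 1) * e) - e * (1 / s)) + d) := by
      field_simp
      ring
    rw [hrepr]
    nlinarith
  · refine ⟨1 / t, by positivity, ?_⟩
    rw [one_div_one_div]
    field_simp
    ring


set_option maxHeartbeats 2000000 in
/-- Proposition 6 (low-uncertainty asymptotics): for fixed `ε ∈ (0,1)`,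
`(Φ(ε,d) − ε)/√d → √(2·ε·(1−ε))` as `d → 0⁺`, i.e.
`Φ(ε,d) = ε + √(2·d·ε·(1−ε)) + o(√d)`. -/
theorem stmt_9 (e : ℝ) (he : e ∈ Set.Ioo (0 : ℝ) 1) :
    Tendsto (fun d : ℝ => (Phi e d - e) / Real.sqrt d)
      (nhdsWithin 0 (Set.Ioi 0)) (nhds (Real.sqrt (2 * e * (1 - e)))) := by
  obtain ⟨he0, he1⟩ := he
  set A := e * (1 - e) with hA
  have hA0 : 0 < A := by rw [hA]; nlinarith
  have hA1 : A ≤ 1/4 := by rw [hA]; nlinarith [sq_nonneg (e - 1/2)]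
  have h2A : 0 < 2*A := by linarith
  have hsA : 0 < Real.sqrt (2*A) := Real.sqrt_pos.2 h2A
  have htgt : (2*e*(1-e) : ℝ) = 2*A := by rw [hA]; ring
  rw [htgt]
  rw [tendsto_order]
  constructor
  · -- lower bound direction
    intro b hb
    set β := (max b 0 + Real.sqrt (2*A))/2 with hβdef
    have hmax0 : (0:ℝ) ≤ max b 0 := le_max_right b 0
    have hmax : max b 0 < Real.sqrt (2*A) := max_lt hb hsA
    have hβ0 : 0 < β := by rw [hβdef]; linarith
    have hbβ : b < β := by
      have := le_max_left b 0
      rw [hβdef]; linarith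
    have hβA : β < Real.sqrt (2*A) := by rw [hβdef]; linarith
    have hβsq : β^2 < 2*A := by
      have := (Real.lt_sqrt hβ0.le).1 hβA
      linarith
    set t1 := min (A/12) ((2*A - β^2)/12) with ht1def
    have ht1p : 0 < t1 := lt_min (by linarith) (by linarith)
    have ht1A : t1 ≤ A/12 := min_le_left _ _
    have ht1b : 12*t1 ≤ 2*A - β^2 := by
      have := min_le_right (A/12) ((2*A - β^2)/12); linarith
    have ht11 : t1 ≤ 1 := le_trans ht1A (by linarith)
    have hcpos : 0 < A/2 - 3*t1 := by linarith
    have hβ2c : β ≤ 2*Real.sqrt (A/2 - 3*t1) := by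
      have h4c : β^2 ≤ (2*Real.sqrt (A/2 - 3*t1))^2 := by
        rw [mul_pow, Real.sq_sqrt hcpos.le]; linarith
      have h2c0 : (0:ℝ) ≤ 2*Real.sqrt (A/2 - 3*t1) := by positivity
      nlinarith
    set T := max 1 (-2*Real.log e/(1-e)) with hTdef
    have hT1 : (1:ℝ) ≤ T := le_max_left _ _
    have hT0 : (0:ℝ) < T := lt_of_lt_of_le one_pos hT1
    have hTlog : -2*Real.log e/(1-e) ≤ T := le_max_right _ _
    have hTlog' : -2*Real.log e ≤ T*(1-e) := by
      rw [div_le_iff₀ (by linarith : (0:ℝ) < 1-e)] at hTlog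
      linarith
    have hloge : Real.log e < 0 := Real.log_neg he0 he1
    have hc1p : 0 < (A/2 - 3*t1) * t1^2 := by positivity
    set c1 := (A/2 - 3*t1) * t1^2 with hc1def
    set c2 := min (c1/T) ((1-e)/2) with hc2def
    have hc2p : 0 < c2 := lt_min (by positivity) (by linarith)
    have hc2a : c2 ≤ c1/T := min_le_left _ _
    have hc2b : c2 ≤ (1-e)/2 := min_le_right _ _
    -- key pointwise bound
    have key : ∀ d : ℝ, 0 < d → ∀ t : ℝ, 0 < t →
        min (β*Real.sqrt d) c2 ≤ (Real.log (1 + (Real.exp t - 1) * e) - e * t + d) / t := by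
      intro d hd t ht
      rcases le_or_gt t t1 with hcase | hcase
      · have hpoly := (psi_poly e t he0 he1 ht.le (le_trans hcase ht11) aux_log_lb aux_log_ub).1
        rw [← hA] at hpoly
        have hψc : (A/2 - 3*t1)*t^2 ≤ Real.log (1 + (Real.exp t - 1) * e) - e * t := by
          nlinarith [sq_nonneg t, mul_pos ht ht]
        refine le_trans (min_le_left _ _) ?_
        rw [le_div_iff₀ ht]
        have hsd := Real.sqrt_nonneg d
        have hsc := Real.sqrt_nonneg (A/2 - 3*t1)
        nlinarith [sq_nonneg (Real.sqrt (A/2 - 3*t1) * t - Real.sqrt d),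
          Real.sq_sqrt hcpos.le, Real.sq_sqrt hd.le,
          mul_nonneg hsd ht.le, mul_pos ht hd]
      · refine le_trans (min_le_right _ _) ?_
        have hψ1 : c1 ≤ Real.log (1 + (Real.exp t1 - 1) * e) - e * t1 := by
          have hpoly := (psi_poly e t1 he0 he1 ht1p.le ht11 aux_log_lb aux_log_ub).1
          rw [← hA] at hpoly
          nlinarith [hpoly]
        have hψmono : Real.log (1 + (Real.exp t1 - 1) * e) - e * t1 ≤
            Real.log (1 + (Real.exp t - 1) * e) - e * t := by
          have := psi_mono e he0 he1 (Set.mem_Ici.2 ht1p.le) (Set.mem_Ici.2 ht.le) hcase.le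
          simpa using this
        have hψc1 : c1 ≤ Real.log (1 + (Real.exp t - 1) * e) - e * t := le_trans hψ1 hψmono
        rcases le_or_gt t T with hcase2 | hcase2
        · rw [le_div_iff₀ ht]
          have h1 : c2*t ≤ c1 := by
            rw [← div_mul_cancel₀ c1 (ne_of_gt hT0)]
            apply mul_le_mul hc2a hcase2 ht.le (by positivity)
          linarith
        · rw [le_div_iff₀ ht]
          have hlin := psi_lin e t he0 he1
          have h2 : c2*t ≤ (1-e)/2*t := mul_le_mul_of_nonneg_right hc2b ht.le
          -- (1-e)/2*t ≤ log e + (1-e)*t  since (1-e)*t/2 ≥ (1-e)*T/2 ≥ -log e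
          have h3 : (1-e)*T ≤ (1-e)*t := mul_le_mul_of_nonneg_left hcase2.le (by linarith)
          nlinarith
    -- eventual bound
    have hδp : 0 < min 1 ((c2/β)^2) := lt_min one_pos (by positivity)
    have hevent : Set.Ioo (0:ℝ) (min 1 ((c2/β)^2)) ∈ nhdsWithin (0:ℝ) (Set.Ioi 0) :=
      Ioo_mem_nhdsGT_of_mem ⟨le_refl 0, hδp⟩
    filter_upwards [hevent] with d hd
    obtain ⟨hd0, hdlt⟩ := hd
    have hsd : 0 < Real.sqrt d := Real.sqrt_pos.2 hd0
    have hmin : β * Real.sqrt d ≤ c2 := by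
      have h1 : Real.sqrt d ≤ c2/β := by
        have h2 : Real.sqrt d < Real.sqrt ((c2/β)^2) :=
          Real.sqrt_lt_sqrt hd0.le (lt_of_lt_of_le hdlt (min_le_right _ _))
        rw [Real.sqrt_sq (by positivity)] at h2
        exact h2.le
      rw [le_div_iff₀ hβ0] at h1
      linarith
    have hPhi := phi_ge e d he0 he1 hd0 _ (key d hd0)
    rw [min_eq_left hmin] at hPhi
    rw [lt_div_iff₀ hsd]
    have := mul_lt_mul_of_pos_right hbβ hsd
    linarith
  · -- upper bound direction
    intro b hb
    have hbA : 0 < b - Real.sqrt (2*A) := by linarith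
    have hδ2p : 0 < (A*(b - Real.sqrt (2*A))/6)^2 := by positivity
    have hδp : 0 < min (A/2) ((A*(b - Real.sqrt (2*A))/6)^2) := lt_min (by linarith) hδ2p
    have hevent : Set.Ioo (0:ℝ) (min (A/2) ((A*(b - Real.sqrt (2*A))/6)^2)) ∈
        nhdsWithin (0:ℝ) (Set.Ioi 0) := Ioo_mem_nhdsGT_of_mem ⟨le_refl 0, hδp⟩
    filter_upwards [hevent] with d hd
    obtain ⟨hd0, hdlt⟩ := hd
    have hsd : 0 < Real.sqrt d := Real.sqrt_pos.2 hd0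
    have hdA : d ≤ A/2 := le_trans hdlt.le (min_le_left _ _)
    set td := Real.sqrt (2*d/A) with htddef
    have htd0 : 0 < td := Real.sqrt_pos.2 (by positivity)
    have htdsq : td^2 = 2*d/A := Real.sq_sqrt (by positivity)
    have htd1 : td ≤ 1 := by
      rw [htddef, show (1:ℝ) = Real.sqrt 1 by rw [Real.sqrt_one]]
      apply Real.sqrt_le_sqrt
      rw [div_le_one hA0]; linarith
    have hPhi := phi_le e d he0 he1 hd0 td htd0
    have hψub := (psi_poly e td he0 he1 htd0.le htd1 aux_log_lb aux_log_ub).2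
    rw [← hA] at hψub
    have hAtdd : A/2*td^2 = d := by rw [htdsq]; field_simp
    have h2d : (Real.log (1 + (Real.exp td - 1) * e) - e * td + d)/td ≤ A*td + 3*td^2 := by
      rw [div_le_iff₀ htd0]
      nlinarith
    have hAtd2 : A*td = Real.sqrt (2*A)*Real.sqrt d := by
      rw [htddef, show A = Real.sqrt (A^2) by rw [Real.sqrt_sq hA0.le],
        ← Real.sqrt_mul (by positivity), ← Real.sqrt_mul (by positivity)]
      congr 1
      field_simp
      rw [Real.sq_sqrt (by positivity)]
    have h3td : 3*td^2 = 6*d/A := by rw [htdsq]; ring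
    have hsd' : Real.sqrt d < A*(b - Real.sqrt (2*A))/6 := by
      have h2 : Real.sqrt d < Real.sqrt ((A*(b - Real.sqrt (2*A))/6)^2) :=
        Real.sqrt_lt_sqrt hd0.le (lt_of_lt_of_le hdlt (min_le_right _ _))
      rwa [Real.sqrt_sq (by positivity)] at h2
    have hddd : d = Real.sqrt d * Real.sqrt d := (Real.mul_self_sqrt hd0.le).symm
    rw [div_lt_iff₀ hsd]
    have hfin : 6*d/A < (b - Real.sqrt (2*A))*Real.sqrt d := by
      rw [div_lt_iff₀ hA0]
      nlinarith [mul_lt_mul_of_pos_right hsd' hsd, Real.mul_self_sqrt hd0.le]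
    nlinarith [hPhi, h2d, hAtd2, h3td, hfin]
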